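/- For every poset X and every S ∈ Dn(Up(Up X)), one has λ_X(Dn(μ^Up_X)(S)) = μ^Up_{Dn X}(Up(λ_X)(λ_{Up X}(S))); concretely, {T ∈ Dn X | ∀ s ∈ S, (T ∩ ⋃₀ s).Nonempty} equals {T ∈ Dn X | ∃ U ∈ Dn(Up X), (∀ s ∈ S, (U ∩ s).Nonempty) ∧ (∀ u ∈ U, (u ∩ T).Nonempty)}. -/
import Mathlib


/-- The action of the upset functor `Up` on a map: the upward closure of the image. -/
def UpMap {X Y : Type*} [Preorder X] [Preorder Y] (f : X → Y) (S : UpperSet X) :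
    UpperSet Y :=
  upperClosure (f '' (S : Set X))

/-- The action of the downset functor `Dn` on a map: the downward closure of the image. -/
def DnMap {X Y : Type*} [Preorder X] [Preorder Y] (f : X → Y) (S : LowerSet X) :
    LowerSet Y :=
  lowerClosure (f '' (S : Set X))

/-- The unit of the upset monad: `x ↦ ↑{x}`. -/
def UpUnit {X : Type*} [Preorder X] (x : X) : UpperSet X :=
  UpperSet.Ici x

/-- The unit of the downset monad: `x ↦ ↓{x}`. -/
def DnUnit {X : Type*} [Preorder X] (x : X) : LowerSet X :=
  LowerSet.Iic x

/-- The multiplication of the upset monad: union. -/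
def UpMul {X : Type*} [Preorder X] (S : UpperSet (UpperSet X)) : UpperSet X :=
  ⟨{x : X | ∃ s ∈ S, x ∈ s}, by
    rintro a b hab ⟨s, hs, has⟩
    exact ⟨s, hs, s.upper hab has⟩⟩

/-- The multiplication of the downset monad: union. -/
def DnMul {X : Type*} [Preorder X] (S : LowerSet (LowerSet X)) : LowerSet X :=
  ⟨{x : X | ∃ s ∈ S, x ∈ s}, by
    rintro a b hba ⟨s, hs, has⟩
    exact ⟨s, hs, s.lower hba has⟩⟩

/-- The distributive law `λ_X : Dn (Up X) → Up (Dn X)`,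
`S ↦ {T ∈ Dn X | ∀ s ∈ S, s ∩ T ≠ ∅}`. -/
def distLaw {X : Type*} [Preorder X] (S : LowerSet (UpperSet X)) : UpperSet (LowerSet X) :=
  ⟨{T : LowerSet X | ∀ s ∈ S, ((s : Set X) ∩ (T : Set X)).Nonempty}, by
    intro T T' hTT' h s hs
    exact (h s hs).imp fun x hx => ⟨hx.1, hTT' hx.2⟩⟩

/-- The multiplication law of the distributive law for `μ^Up`:
`λ_X (Dn(μ^Up_X) S) = μ^Up_{Dn X} (Up(λ_X) (λ_{Up X} S))`, and concretely
`{T ∈ Dn X | ∀ s ∈ S, (T ∩ ⋃₀ s).Nonempty}` equals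
`{T ∈ Dn X | ∃ U ∈ Dn(Up X), (∀ s ∈ S, (U ∩ s).Nonempty) ∧ (∀ u ∈ U, (u ∩ T).Nonempty)}`. -/
theorem distLaw_upMul {X : Type*} [PartialOrder X] (S : LowerSet (UpperSet (UpperSet X))) :
    distLaw (DnMap (UpMul (X := X)) S) = UpMul (UpMap (distLaw (X := X)) (distLaw S)) ∧
    (distLaw (DnMap (UpMul (X := X)) S) : Set (LowerSet X))
      = {T : LowerSet X | ∀ s ∈ S, ((T : Set X) ∩ ⋃ u ∈ (s : Set (UpperSet X)), (u : Set X)).Nonempty} ∧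
    (distLaw (DnMap (UpMul (X := X)) S) : Set (LowerSet X))
      = {T : LowerSet X | ∃ U : LowerSet (UpperSet X),
          (∀ s ∈ S, ((U : Set (UpperSet X)) ∩ (s : Set (UpperSet X))).Nonempty) ∧
          (∀ u ∈ U, ((u : Set X) ∩ (T : Set X)).Nonempty)} := by
  have eq2 : (distLaw (DnMap (UpMul (X := X)) S) : Set (LowerSet X))
      = {T : LowerSet X | ∀ s ∈ S,
          ((T : Set X) ∩ ⋃ u ∈ (s : Set (UpperSet X)), (u : Set X)).Nonempty} := by
    ext T
    constructor
    · intro h s hs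
      have hmem : UpMul s ∈ DnMap (UpMul (X := X)) S :=
        subset_lowerClosure (Set.mem_image_of_mem _ hs)
      obtain ⟨x, hx1, hx2⟩ := h (UpMul s) hmem
      obtain ⟨u, hu, hxu⟩ := hx1
      exact ⟨x, hx2, Set.mem_biUnion hu hxu⟩
    · intro h s' hs'
      obtain ⟨b, ⟨s, hs, rfl⟩, hle⟩ := hs'
      obtain ⟨x, hxT, hx⟩ := h s hs
      obtain ⟨u, hu, hxu⟩ := Set.mem_iUnion₂.1 hx
      exact ⟨x, (UpperSet.coe_subset_coe.2 hle) ⟨u, hu, hxu⟩, hxT⟩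
  have eq3 : (distLaw (DnMap (UpMul (X := X)) S) : Set (LowerSet X))
      = {T : LowerSet X | ∃ U : LowerSet (UpperSet X),
          (∀ s ∈ S, ((U : Set (UpperSet X)) ∩ (s : Set (UpperSet X))).Nonempty) ∧
          (∀ u ∈ U, ((u : Set X) ∩ (T : Set X)).Nonempty)} := by
    rw [eq2]
    ext T
    constructor
    · intro h
      refine ⟨⟨{u : UpperSet X | ((u : Set X) ∩ (T : Set X)).Nonempty}, ?_⟩, ?_, ?_⟩
      · intro a b hba ha
        exact ha.imp fun x hx => ⟨(UpperSet.coe_subset_coe.2 hba) hx.1, hx.2⟩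
      · intro s hs
        obtain ⟨x, hxT, hx⟩ := h s hs
        obtain ⟨u, hu, hxu⟩ := Set.mem_iUnion₂.1 hx
        exact ⟨u, ⟨x, hxu, hxT⟩, hu⟩
      · exact fun u hu => hu
    · rintro ⟨U, hUS, hUT⟩ s hs
      obtain ⟨u, huU, hus⟩ := hUS s hs
      obtain ⟨x, hxu, hxT⟩ := hUT u huU
      exact ⟨x, hxT, Set.mem_biUnion hus hxu⟩
  have eqR : (UpMul (UpMap (distLaw (X := X)) (distLaw S)) : Set (LowerSet X))
      = {T : LowerSet X | ∃ U : LowerSet (UpperSet X),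
          (∀ s ∈ S, ((U : Set (UpperSet X)) ∩ (s : Set (UpperSet X))).Nonempty) ∧
          (∀ u ∈ U, ((u : Set X) ∩ (T : Set X)).Nonempty)} := by
    ext T
    constructor
    · rintro ⟨V, hV, hTV⟩
      obtain ⟨b, ⟨U, hU, rfl⟩, hle⟩ := hV
      refine ⟨U, fun s hs => ?_, ?_⟩
      · exact (hU s hs).imp fun u hu => ⟨hu.2, hu.1⟩
      · exact (UpperSet.coe_subset_coe.2 hle) hTV
    · rintro ⟨U, hUS, hUT⟩
      refine ⟨distLaw U, subset_upperClosure (Set.mem_image_of_mem _ ?_), hUT⟩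
      exact fun s hs => (hUS s hs).imp fun u hu => ⟨hu.2, hu.1⟩
  exact ⟨SetLike.coe_injective (eq3.trans eqR.symm), eq2, eq3⟩
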